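/- arXiv:1507.01580 — 4 statements merged into one kernel-verified Lean document; each statement's English description precedes it below -/
import Mathlib

section
/- With the change of variables θ = 2λπ^{rr}, θ_ϕ = 2γπ^{rϕ} + 2λ_ϕπ^{rr}, σ = π^{ϕϕ} + 2λᶲπ^{rϕ} + (λᶲ)²π^{rr}, and the metric variables λ = 1/√(g^{rr}), λ_ϕ = g_{rϕ}, γ = g_{ϕϕ}, the pairing identity π^{ij}δg_{ij} = θ δλ + θ_ϕ δλᶲ + σ δγ holds, where π^{ij}δg_{ij} = π^{rr}δg_{rr} + 2π^{rϕ}δg_{rϕ} + π^{ϕϕ}δg_{ϕϕ}. -/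
/-- The pairing identity `π^{ij}δg_{ij} = θ δλ + θ_ϕ δλᶲ + σ δγ` for the radial
decomposition variables `θ = 2λπ^{rr}`, `θ_ϕ = 2γπ^{rϕ} + 2λ_ϕπ^{rr}`,
`σ = π^{ϕϕ} + 2λᶲπ^{rϕ} + (λᶲ)²π^{rr}`, where `g_{rr} = λ² + λᶲλ_ϕ`, `g_{rϕ} = λ_ϕ`,
`g_{ϕϕ} = γ`, `λᶲ = λ_ϕ/γ`, and `δ` is a first-order variation in an arbitrary
direction `(δλ, δλ_ϕ, δγ)` with `δλᶲ` given by the chain rule. -/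
theorem stmt3 (lam lamphi gam : ℝ) (hlam : 0 < lam) (hgam : 0 < gam)
    (prr prph pphph : ℝ) (dlam dlamphi dgam : ℝ) :
    let lamup : ℝ := lamphi / gam
    let dlamup : ℝ := dlamphi / gam - lamphi * dgam / gam ^ 2
    let dgrr : ℝ := 2 * lam * dlam + dlamup * lamphi + lamup * dlamphi
    let dgrph : ℝ := dlamphi
    let dgphph : ℝ := dgam
    let θ : ℝ := 2 * lam * prr
    let θφ : ℝ := 2 * gam * prph + 2 * lamphi * prr
    let σ : ℝ := pphph + 2 * lamup * prph + lamup ^ 2 * prr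
    prr * dgrr + 2 * prph * dgrph + pphph * dgphph = θ * dlam + θφ * dlamup + σ * dgam := by
  have hg : gam ≠ 0 := ne_of_gt hgam
  simp only
  field_simp
  ring
end

section
/- Suppose the modes satisfy i{Lₘ,Lₙ} = (m−n)L_{m+n}, i{Lₘ,Tᵃₙ} = −nTᵃ_{m+n}, i{Tᵃₘ,Tᵇₙ} = i f^{ab}_c T^c_{m+n} + (l/(8G))η^{ab}mδ_{m+n,0} (sl(2,ℝ) current algebra with f and η as above, central terms suppressed on Virasoro), and let H = (1/l)(L₀ + ½T⁺₀ − 2Δ T⁻₀) with Δ = −α², α > 0. Then the time-dependent combinations T̃⁰ₘ(t) = e^{imt/l}[T⁰ₘcos(2αt/l) + (1/(4α))T⁺ₘsin(2αt/l) − αT⁻ₘsin(2αt/l)] satisfy the conservation equation d/dt T̃⁰ₘ(t) + {T̃⁰ₘ(t), H} = 0, where d/dt acts only on the explicit time dependence. -/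
open Complex

/-- In a Poisson algebra whose modes satisfy `i{Lₘ,Lₙ} = (m−n)L_{m+n}`,
`i{Lₘ,Tᵃₙ} = −nTᵃ_{m+n}`, `i{Tᵃₘ,Tᵇₙ} = i f^{ab}_c T^c_{m+n} + (l/(8G))η^{ab}mδ_{m+n,0}`
(the `sl(2,ℝ)` current algebra, with `f⁰⁺₊ = −1`, `f⁰⁻₋ = 1`, `f⁺⁻₀ = 2`, `η⁰⁰ = −1`,
`η⁺⁻ = 2`, indices `0,+,− = 0,1,2`, central terms represented by the element `one`),
with Hamiltonian `H = (1/l)(L₀ + ½T⁺₀ − 2Δ T⁻₀)`, `Δ = −α²`, `α > 0`, the combinations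
`T̃⁰ₘ(t) = e^{imt/l}[T⁰ₘ cos(2αt/l) + (1/(4α))T⁺ₘ sin(2αt/l) − αT⁻ₘ sin(2αt/l)]`
satisfy `d/dt T̃⁰ₘ(t) + {T̃⁰ₘ(t), H} = 0`. -/
theorem stmt8 (A : Type*) [NormedAddCommGroup A] [NormedSpace ℂ A]
    (br : A →ₗ[ℂ] A →ₗ[ℂ] A) (l G α Δ : ℝ) (hl : 0 < l) (hG : 0 < G) (hα : 0 < α)
    (hΔ : Δ = -α ^ 2)
    (L : ℤ → A) (T : Fin 3 → ℤ → A) (one : A)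
    (hanti : ∀ x y, br x y = -br y x)
    (hone : ∀ x, br x one = 0)
    (hTL : ∀ (a : Fin 3) (m n : ℤ), br (T a m) (L n) = (-(Complex.I * (m : ℂ))) • T a (m + n))
    (hT00 : ∀ m n : ℤ, br (T 0 m) (T 0 n) =
      (if m + n = 0 then Complex.I * ((l : ℂ) / (8 * (G : ℂ))) * (m : ℂ) else 0) • one)
    (hT01 : ∀ m n : ℤ, br (T 0 m) (T 1 n) = -T 1 (m + n))
    (hT02 : ∀ m n : ℤ, br (T 0 m) (T 2 n) = T 2 (m + n))
    (hT12 : ∀ m n : ℤ, br (T 1 m) (T 2 n) = (2 : ℂ) • T 0 (m + n)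
      + (if m + n = 0 then -(Complex.I * ((l : ℂ) / (4 * (G : ℂ))) * (m : ℂ)) else 0) • one)
    (hT11 : ∀ m n : ℤ, br (T 1 m) (T 1 n) = 0)
    (hT22 : ∀ m n : ℤ, br (T 2 m) (T 2 n) = 0) :
    let H : A := ((l : ℂ)⁻¹) • (L 0 + (1 / 2 : ℂ) • T 1 0 - (2 * (Δ : ℂ)) • T 2 0)
    let Tt : ℤ → ℝ → A := fun m t =>
      Complex.exp (Complex.I * (m : ℂ) * (t : ℂ) / (l : ℂ)) •
        (((Real.cos (2 * α * t / l) : ℝ) : ℂ) • T 0 m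
          + (((1 / (4 * α)) * Real.sin (2 * α * t / l) : ℝ) : ℂ) • T 1 m
          - ((α * Real.sin (2 * α * t / l) : ℝ) : ℂ) • T 2 m)
    ∀ (m : ℤ) (t : ℝ), HasDerivAt (Tt m) (-(br (Tt m t) H)) t := by

  intro H Tt m t
  have hlC : (l : ℂ) ≠ 0 := by exact_mod_cast hl.ne'
  have hαC : (α : ℂ) ≠ 0 := by exact_mod_cast hα.ne'
  -- rewrite Tt as an explicit linear combination
  have hfun : Tt m = fun t : ℝ =>
      (Complex.exp (Complex.I * (m : ℂ) * (t : ℂ) / (l : ℂ)) *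
        ((Real.cos (2 * α * t / l) : ℝ) : ℂ)) • T 0 m
    + (Complex.exp (Complex.I * (m : ℂ) * (t : ℂ) / (l : ℂ)) *
        (((1 / (4 * α)) * Real.sin (2 * α * t / l) : ℝ) : ℂ)) • T 1 m
    - (Complex.exp (Complex.I * (m : ℂ) * (t : ℂ) / (l : ℂ)) *
        ((α * Real.sin (2 * α * t / l) : ℝ) : ℂ)) • T 2 m := by
    funext t
    simp only [Tt, smul_add, smul_sub, smul_smul]
  rw [hfun]
  -- scalar derivatives
  have harg : HasDerivAt (fun t : ℝ => 2 * α * t / l) (2 * α / l) t := by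
    simpa using ((hasDerivAt_id t).const_mul (2 * α)).div_const l
  have hcosR : HasDerivAt (fun t : ℝ => Real.cos (2 * α * t / l))
      (-Real.sin (2 * α * t / l) * (2 * α / l)) t :=
    (Real.hasDerivAt_cos _).comp t harg
  have hsinR : HasDerivAt (fun t : ℝ => Real.sin (2 * α * t / l))
      (Real.cos (2 * α * t / l) * (2 * α / l)) t :=
    (Real.hasDerivAt_sin _).comp t harg
  have hcos : HasDerivAt (fun t : ℝ => ((Real.cos (2 * α * t / l) : ℝ) : ℂ))
      (((-Real.sin (2 * α * t / l) * (2 * α / l) : ℝ) : ℂ)) t := hcosR.ofReal_comp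
  have hsin : HasDerivAt (fun t : ℝ => ((Real.sin (2 * α * t / l) : ℝ) : ℂ))
      (((Real.cos (2 * α * t / l) * (2 * α / l) : ℝ) : ℂ)) t := hsinR.ofReal_comp
  have hexpC : HasDerivAt (fun z : ℂ => Complex.exp (Complex.I * (m : ℂ) * z / (l : ℂ)))
      (Complex.exp (Complex.I * (m : ℂ) * (t : ℂ) / (l : ℂ)) * (Complex.I * (m : ℂ) / (l : ℂ)))
      (t : ℂ) := by
    have h1 : HasDerivAt (fun z : ℂ => Complex.I * (m : ℂ) * z / (l : ℂ))
        (Complex.I * (m : ℂ) / (l : ℂ)) (t : ℂ) := by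
      simpa using ((hasDerivAt_id (t : ℂ)).const_mul (Complex.I * (m : ℂ))).div_const (l : ℂ)
    exact h1.cexp
  have hE : HasDerivAt (fun t : ℝ => Complex.exp (Complex.I * (m : ℂ) * (t : ℂ) / (l : ℂ)))
      (Complex.exp (Complex.I * (m : ℂ) * (t : ℂ) / (l : ℂ)) * (Complex.I * (m : ℂ) / (l : ℂ)))
      t := hexpC.comp_ofReal
  have hs1 : HasDerivAt
      (fun t : ℝ => (((1 / (4 * α)) * Real.sin (2 * α * t / l) : ℝ) : ℂ))
      ((((1 / (4 * α)) * (Real.cos (2 * α * t / l) * (2 * α / l)) : ℝ) : ℂ)) t := by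
    have := hsinR.const_mul (1 / (4 * α))
    exact (this.ofReal_comp)
  have hs2 : HasDerivAt
      (fun t : ℝ => ((α * Real.sin (2 * α * t / l) : ℝ) : ℂ))
      (((α * (Real.cos (2 * α * t / l) * (2 * α / l)) : ℝ) : ℂ)) t := by
    have := hsinR.const_mul α
    exact (this.ofReal_comp)
  have hD := (((hE.mul hcos).smul_const (T 0 m)).add ((hE.mul hs1).smul_const (T 1 m))).sub
      ((hE.mul hs2).smul_const (T 2 m))
  convert hD using 1
  · rfl
  -- now prove the bracket equality
  have h10 : br (T 1 m) (T 2 0) = (2 : ℂ) • T 0 m := by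
    rw [hT12]
    have hz : (if m + 0 = 0 then -(Complex.I * ((l : ℂ) / (4 * (G : ℂ))) * (m : ℂ)) else 0)
        = 0 := by
      split_ifs with h
      · have : m = 0 := by omega
        simp [this]
      · rfl
    rw [hz]
    simp
  have h21 : br (T 2 m) (T 1 0) = (-2 : ℂ) • T 0 m := by
    rw [hanti, hT12]
    simp
  have hΔC : (Δ : ℂ) = -(α : ℂ) ^ 2 := by
    rw [hΔ]; push_cast; ring
  simp only [H, map_add, map_sub, map_smul, LinearMap.add_apply, LinearMap.sub_apply,
    LinearMap.smul_apply, hTL, hT01, hT02, h10, h21, hT11, hT22, add_zero, smul_zero,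
    zero_smul, zero_sub, sub_zero, zero_add, hΔC]
  push_cast
  match_scalars <;> field_simp <;> ring
end

section
/- In a Poisson algebra of ℤ-indexed modes with i{T⁰ₘ,T⁺ₙ} = −i T⁺_{m+n}, i{T⁰ₘ,T⁻ₙ} = i T⁻_{m+n}, i{T⁺ₘ,T⁻ₙ} = 2i T⁰_{m+n} + (l/(4G))mδ_{m+n,0}, i{T⁰ₘ,T⁰ₙ} = −(l/(8G))mδ_{m+n,0}, and Hamiltonian lH = L₀ + ½T⁺₀ − 2ΔT⁻₀ with i{Lₘ,Tᵃₙ} = −nTᵃ_{m+n}: the bracket of the primary constraint T⁰ₘ with lH equals −imT⁰ₘ − ½T⁺ₘ − 2ΔT⁻ₘ, so that on T⁰ ≈ 0 the secondary constraint is K⁺ₘ := ½T⁺ₘ + 2ΔT⁻ₘ ≈ 0; moreover {K⁺ₘ, lH} = −imK⁺ₘ − 4ΔT⁰ₘ, which vanishes on the constraint surface, so the constraint set {T⁰ₘ, K⁺ₘ} is complete. -/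
/-- In the Poisson algebra of modes with `i{T⁰ₘ,T⁺ₙ} = −iT⁺_{m+n}`,
`i{T⁰ₘ,T⁻ₙ} = iT⁻_{m+n}`, `i{T⁺ₘ,T⁻ₙ} = 2iT⁰_{m+n} + (l/(4G))mδ_{m+n,0}`,
`i{T⁰ₘ,T⁰ₙ} = −(l/(8G))mδ_{m+n,0}`, `i{Lₘ,Tᵃₙ} = −nTᵃ_{m+n}` (indices `0,+,− = 0,1,2`;
scalars represented by `one`), and Hamiltonian `lH = L₀ + ½T⁺₀ − 2ΔT⁻₀`:
the bracket of the primary constraint `T⁰ₘ` with `lH` equals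
`−imT⁰ₘ − ½T⁺ₘ − 2ΔT⁻ₘ = −imT⁰ₘ − K⁺ₘ` (so the secondary constraint is
`K⁺ₘ := ½T⁺ₘ + 2ΔT⁻ₘ ≈ 0`); moreover `{K⁺ₘ, lH} = −imK⁺ₘ − 4ΔT⁰ₘ`, which lies in the
span of the constraints `{T⁰ₙ, K⁺ₙ}`, i.e. vanishes on the constraint surface, so the
constraint set is complete. -/
theorem stmt12 (A : Type*) [AddCommGroup A] [Module ℂ A]
    (br : A →ₗ[ℂ] A →ₗ[ℂ] A) (l G Δ : ℝ) (hl : 0 < l) (hG : 0 < G)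
    (L : ℤ → A) (T : Fin 3 → ℤ → A) (one : A)
    (hanti : ∀ x y, br x y = -br y x)
    (hone : ∀ x, br x one = 0)
    (hTL : ∀ (a : Fin 3) (m n : ℤ), br (T a m) (L n) = (-(Complex.I * (m : ℂ))) • T a (m + n))
    (hT00 : ∀ m n : ℤ, br (T 0 m) (T 0 n) =
      (if m + n = 0 then Complex.I * ((l : ℂ) / (8 * (G : ℂ))) * (m : ℂ) else 0) • one)
    (hT01 : ∀ m n : ℤ, br (T 0 m) (T 1 n) = -T 1 (m + n))
    (hT02 : ∀ m n : ℤ, br (T 0 m) (T 2 n) = T 2 (m + n))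
    (hT12 : ∀ m n : ℤ, br (T 1 m) (T 2 n) = (2 : ℂ) • T 0 (m + n)
      + (if m + n = 0 then -(Complex.I * ((l : ℂ) / (4 * (G : ℂ))) * (m : ℂ)) else 0) • one)
    (hT11 : ∀ m n : ℤ, br (T 1 m) (T 1 n) = 0)
    (hT22 : ∀ m n : ℤ, br (T 2 m) (T 2 n) = 0) :
    let lH : A := L 0 + (1 / 2 : ℂ) • T 1 0 - (2 * (Δ : ℂ)) • T 2 0
    let Kp : ℤ → A := fun m => (1 / 2 : ℂ) • T 1 m + (2 * (Δ : ℂ)) • T 2 m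
    (∀ m : ℤ, br (T 0 m) lH = (-(Complex.I * (m : ℂ))) • T 0 m - Kp m) ∧
    (∀ m : ℤ, br (Kp m) lH = (-(Complex.I * (m : ℂ))) • Kp m - (4 * (Δ : ℂ)) • T 0 m) ∧
    (∀ m : ℤ, br (Kp m) lH ∈ Submodule.span ℂ (Set.range (T 0) ∪ Set.range Kp)) := by
  intro lH Kp
  have hz : ∀ m : ℤ, (if m = 0 then -(Complex.I * ((l : ℂ) / (4 * (G : ℂ))) * (m : ℂ)) else 0) = 0 := by
    intro m
    split_ifs with h
    · simp [h]
    · rfl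
  have hz' : ∀ m : ℤ, (if (0 : ℤ) + m = 0 then -(Complex.I * ((l : ℂ) / (4 * (G : ℂ))) * ((0 : ℤ) : ℂ)) else 0) = 0 := by
    intro m; split_ifs <;> simp
  have h21 : ∀ m : ℤ, br (T 2 m) (T 1 0) = -((2 : ℂ) • T 0 m) := by
    intro m
    rw [hanti, hT12, hz']
    simp [add_comm]
  have key1 : ∀ m : ℤ, br (T 0 m) lH = (-(Complex.I * (m : ℂ))) • T 0 m - Kp m := by
    intro m
    simp only [lH, Kp, map_add, map_sub, map_smul, hTL, hT01, hT02, add_zero]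
    module
  have key2 : ∀ m : ℤ, br (Kp m) lH = (-(Complex.I * (m : ℂ))) • Kp m - (4 * (Δ : ℂ)) • T 0 m := by
    intro m
    simp only [lH, Kp, map_add, map_sub, map_smul, LinearMap.add_apply, LinearMap.sub_apply,
      LinearMap.smul_apply, hTL, hT11, hT22, hT12, h21, add_zero, hz]
    module
  refine ⟨key1, key2, fun m => ?_⟩
  rw [key2 m]
  have h1 : Kp m ∈ Submodule.span ℂ (Set.range (T 0) ∪ Set.range Kp) :=
    Submodule.subset_span (Or.inr ⟨m, rfl⟩)
  have h2 : T 0 m ∈ Submodule.span ℂ (Set.range (T 0) ∪ Set.range Kp) :=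
    Submodule.subset_span (Or.inl ⟨m, rfl⟩)
  exact sub_mem (Submodule.smul_mem _ _ h1) (Submodule.smul_mem _ _ h2)
end

section
/- In the setting of the preceding constrained system with Δ ≠ 0, the quantities K⁻ₘ := ½T⁺ₘ − 2ΔT⁻ₘ Poisson-commute with all constraints on the constraint surface: {K⁻ₘ, T⁰ₙ} ≈ 0 and {K⁻ₘ, K⁺ₙ} ≈ 0, and satisfy i{K⁻ₘ, K⁻ₙ} = −(Δl/(2G))mδ_{m+n,0} on the constraint surface. -/
/-- In the constrained Virasoro–sl(2,ℝ) current algebra system with `Δ ≠ 0`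
(brackets `i{T⁰ₘ,T±ₙ} = ∓iT±_{m+n}`, `i{T⁺ₘ,T⁻ₙ} = 2iT⁰_{m+n} + (l/(4G))mδ_{m+n,0}`,
`i{T⁰ₘ,T⁰ₙ} = −(l/(8G))mδ_{m+n,0}`, `i{T±ₘ,T±ₙ} = 0`; constraints `T⁰ₘ ≈ 0` and
`K⁺ₘ = ½T⁺ₘ + 2ΔT⁻ₘ ≈ 0`; `≈` meaning modulo the span of the constraints),
the quantities `K⁻ₘ := ½T⁺ₘ − 2ΔT⁻ₘ` Poisson-commute with all constraints on the
constraint surface, `{K⁻ₘ,T⁰ₙ} ≈ 0` and `{K⁻ₘ,K⁺ₙ} ≈ 0`, and satisfy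
`i{K⁻ₘ,K⁻ₙ} = −(Δl/(2G))mδ_{m+n,0}` on the constraint surface. -/
theorem stmt13 (A : Type*) [AddCommGroup A] [Module ℂ A]
    (br : A →ₗ[ℂ] A →ₗ[ℂ] A) (l G Δ : ℝ) (hl : 0 < l) (hG : 0 < G) (hΔ : Δ ≠ 0)
    (T : Fin 3 → ℤ → A) (one : A)
    (hanti : ∀ x y, br x y = -br y x)
    (hT00 : ∀ m n : ℤ, br (T 0 m) (T 0 n) =
      (if m + n = 0 then Complex.I * ((l : ℂ) / (8 * (G : ℂ))) * (m : ℂ) else 0) • one)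
    (hT01 : ∀ m n : ℤ, br (T 0 m) (T 1 n) = -T 1 (m + n))
    (hT02 : ∀ m n : ℤ, br (T 0 m) (T 2 n) = T 2 (m + n))
    (hT12 : ∀ m n : ℤ, br (T 1 m) (T 2 n) = (2 : ℂ) • T 0 (m + n)
      + (if m + n = 0 then -(Complex.I * ((l : ℂ) / (4 * (G : ℂ))) * (m : ℂ)) else 0) • one)
    (hT11 : ∀ m n : ℤ, br (T 1 m) (T 1 n) = 0)
    (hT22 : ∀ m n : ℤ, br (T 2 m) (T 2 n) = 0) :
    let Kp : ℤ → A := fun m => (1 / 2 : ℂ) • T 1 m + (2 * (Δ : ℂ)) • T 2 m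
    let Km : ℤ → A := fun m => (1 / 2 : ℂ) • T 1 m - (2 * (Δ : ℂ)) • T 2 m
    let S : Submodule ℂ A := Submodule.span ℂ (Set.range (T 0) ∪ Set.range Kp)
    (∀ m n : ℤ, br (Km m) (T 0 n) ∈ S) ∧
    (∀ m n : ℤ, br (Km m) (Kp n) ∈ S) ∧
    (∀ m n : ℤ, br (Km m) (Km n)
      - (if m + n = 0 then Complex.I * ((Δ : ℂ) * (l : ℂ) / (2 * (G : ℂ))) * (m : ℂ) else 0) • one
      ∈ S) := by
  intro Kp Km S
  have hT0S : ∀ k : ℤ, T 0 k ∈ S := fun k =>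
    Submodule.subset_span (Or.inl ⟨k, rfl⟩)
  have hKpS : ∀ k : ℤ, Kp k ∈ S := fun k =>
    Submodule.subset_span (Or.inr ⟨k, rfl⟩)
  have hT21 : ∀ m n : ℤ, br (T 2 m) (T 1 n) = -br (T 1 n) (T 2 m) := fun m n => hanti _ _
  have hT10 : ∀ m n : ℤ, br (T 1 m) (T 0 n) = -br (T 0 n) (T 1 m) := fun m n => hanti _ _
  have hT20 : ∀ m n : ℤ, br (T 2 m) (T 0 n) = -br (T 0 n) (T 2 m) := fun m n => hanti _ _
  refine ⟨?_, ?_, ?_⟩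
  · intro m n
    have h1 : br (Km m) (T 0 n) = Kp (m + n) := by
      simp only [Km, Kp, map_sub, map_smul, LinearMap.sub_apply, LinearMap.smul_apply,
        hT10, hT20, hT01, hT02, add_comm n m]
      module
    rw [h1]; exact hKpS _
  · intro m n
    have h1 : br (Km m) (Kp n) = (4 * (Δ : ℂ)) • T 0 (m + n) := by
      simp only [Km, Kp, map_sub, map_add, map_smul, LinearMap.sub_apply, LinearMap.add_apply,
        LinearMap.smul_apply, hT11, hT22, hT21, hT12]
      by_cases h : m + n = 0
      · have hn : n + m = 0 := by omega
        have hcn : (n : ℂ) = -(m : ℂ) := by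
          have : n = -m := by omega
          simp [this]
        simp only [h, hn, if_true, add_comm n m, hcn]
        module
      · have hn : ¬ n + m = 0 := by omega
        simp only [h, hn, if_false, add_comm n m]
        module
    rw [h1]
    exact Submodule.smul_mem _ _ (hT0S _)
  · intro m n
    have h1 : br (Km m) (Km n) =
        (if m + n = 0 then Complex.I * ((Δ : ℂ) * (l : ℂ) / (2 * (G : ℂ))) * (m : ℂ) else 0) • one := by
      simp only [Km, map_sub, map_smul, LinearMap.sub_apply, LinearMap.smul_apply,
        hT11, hT22, hT21, hT12]
      by_cases h : m + n = 0
      · have hn : n + m = 0 := by omega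
        have hcn : (n : ℂ) = -(m : ℂ) := by
          have : n = -m := by omega
          simp [this]
        simp only [h, hn, if_true, add_comm n m, hcn]
        have hG0 : (G : ℂ) ≠ 0 := by
          exact_mod_cast Complex.ofReal_ne_zero.mpr hG.ne'
        have key : (1 / 2 : ℂ) * (2 * (Δ : ℂ)) * (Complex.I * ((l : ℂ) / (4 * (G : ℂ))) * (m : ℂ)) * 2
            = Complex.I * ((Δ : ℂ) * (l : ℂ) / (2 * (G : ℂ))) * (m : ℂ) := by
          field_simp; ring
        match_scalars <;> field_simp <;> ring
      · have hn : ¬ n + m = 0 := by omega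
        simp only [h, hn, if_false, add_comm n m]
        module
    rw [h1, sub_self]
    exact Submodule.zero_mem _
end
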